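/- If L is a levellised (n+1)-lattice with n > 1, then L̄ = L \ {n} (removing the last-labelled atom) is a levellised n-lattice, and the depth of every element i with 1 ≤ i < n is the same in L̄ as in L. -/

import Mathlib

namespace PaperLattice

variable {N : ℕ}

/-- Depth: one less than the maximum length of a chain from `t` down to `a` w.r.t. `le`. -/
noncomputable def dep (le : Fin N → Fin N → Prop) (t a : Fin N) : ℕ :=
  sSup {k | ∃ l : List (Fin N), List.Chain' (fun x y => le y x ∧ y ≠ x) l ∧
    l.head? = some t ∧ l.getLast? = some a ∧ l.length = k + 1}

/-- The `d`-th level: elements of depth `d`. -/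
noncomputable def lev (le : Fin N → Fin N → Prop) (t : Fin N) (d : ℕ) : Set (Fin N) :=
  {a | dep le t a = d}

/-- A labelled poset is levellised if depth is monotone in the nonzero labels. -/
def Levellised (le : Fin N → Fin N → Prop) (t : Fin N) : Prop :=
  ∀ i j : Fin N, 0 < (i : ℕ) → (i : ℕ) ≤ (j : ℕ) → dep le t i ≤ dep le t j

def lt' (le : Fin N → Fin N → Prop) (a b : Fin N) : Prop := le a b ∧ a ≠ b

/-- `b` covers `a`. -/
def CovByRel (le : Fin N → Fin N → Prop) (a b : Fin N) : Prop :=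
  lt' le a b ∧ ∀ x, lt' le a x → lt' le x b → False

/-- The covering set of `a`. -/
def cov (le : Fin N → Fin N → Prop) (a : Fin N) : Set (Fin N) := {b | CovByRel le a b}

/-- The up-set of `A`. -/
def upset (le : Fin N → Fin N → Prop) (A : Set (Fin N)) : Set (Fin N) :=
  {x | ∃ a ∈ A, le a x}

def AntichainRel (le : Fin N → Fin N → Prop) (A : Set (Fin N)) : Prop :=
  ∀ a ∈ A, ∀ b ∈ A, a ≠ b → ¬ le a b

/-- Binary weight of a set of labels. -/
noncomputable def wt (A : Set (Fin N)) : ℕ :=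
  ∑ j : Fin N, A.indicator (fun j => 2 ^ (j : ℕ)) j

/-- `z` is a bottom and `o` a top for `le`. -/
def Bounds (le : Fin N → Fin N → Prop) (z o : Fin N) : Prop :=
  (∀ a, le z a) ∧ (∀ a, le a o)

/-- The order obtained from `le` by adding `m` new atoms, the `i`-th having covering set `A i`. -/
def extLe {n m : ℕ} (le : Fin n → Fin n → Prop) (A : Fin m → Set (Fin n)) :
    Fin (n + m) → Fin (n + m) → Prop := fun x y =>
  if hx : (x : ℕ) < n then
    if hy : (y : ℕ) < n then le ⟨x, hx⟩ ⟨y, hy⟩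
    else (x : ℕ) = 0
  else
    if hy : (y : ℕ) < n then
      (⟨y, hy⟩ : Fin n) ∈ upset le (A ⟨(x : ℕ) - n, by have := x.isLt; omega⟩)
    else x = y

/-- The relabelled order `π(L)`. -/
def permLe {n : ℕ} (π : Equiv.Perm (Fin n)) (le : Fin n → Fin n → Prop) :
    Fin n → Fin n → Prop := fun a b => le (π.symm a) (π.symm b)

private lemma dtrans (L : Lattice (Fin N)) :
    Transitive (fun x y : Fin N => L.le y x ∧ y ≠ x) := by
  rintro a b c ⟨h1, h2⟩ ⟨h3, h4⟩
  refine ⟨L.le_trans _ _ _ h3 h1, fun h => ?_⟩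
  subst h
  exact h2 (L.le_antisymm _ _ h3 h1).symm

private lemma chain_bdd (L : Lattice (Fin N)) (t a : Fin N) :
    BddAbove {k | ∃ l : List (Fin N), List.Chain' (fun x y => L.le y x ∧ y ≠ x) l ∧
      l.head? = some t ∧ l.getLast? = some a ∧ l.length = k + 1} := by
  refine ⟨N, fun k hk => ?_⟩
  obtain ⟨l, hc, -, -, hlen⟩ := hk
  haveI : IsTrans (Fin N) (fun x y : Fin N => L.le y x ∧ y ≠ x) := ⟨dtrans L⟩
  have hp := List.isChain_iff_pairwise.mp hc
  have hnd : l.Nodup := hp.imp (fun h => h.2.symm)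
  have := hnd.length_le_card
  simp only [Fintype.card_fin] at this
  omega

private lemma chain'_map_of_mem {α β : Type*} {R : α → α → Prop} {S : β → β → Prop}
    (f : α → β) (l : List α) (h : l.Chain' R)
    (hf : ∀ x ∈ l, ∀ y ∈ l, R x y → S (f x) (f y)) : (l.map f).Chain' S := by
  induction l with
  | nil => simp [List.Chain']
  | cons a l ih =>
    cases l with
    | nil => simp [List.Chain']
    | cons b l =>
      replace h := List.isChain_cons_cons.mp h
      rw [List.map_cons, List.map_cons]; refine List.isChain_cons_cons.mpr ?_
      refine ⟨hf a (by simp) b (by simp) h.1, ?_⟩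
      rw [← List.map_cons]
      exact ih h.2 (fun x hx y hy hr => hf x (by simp [hx]) y (by simp [hy]) hr)


private def rle {n : ℕ} (L : Lattice (Fin (n + 1))) : Fin n → Fin n → Prop :=
  fun a b => L.le a.castSucc b.castSucc

private def mkM {n : ℕ} (L : Lattice (Fin (n + 1))) (hpos : 0 < n)
    (hsup : ∀ a b : Fin n, L.sup a.castSucc b.castSucc ≠ Fin.last n)
    (hz : ∀ a, L.le ⟨0, Nat.succ_pos n⟩ a)
    (hA : ∀ x, L.le x (Fin.last n) → x ≠ Fin.last n → x = ⟨0, Nat.succ_pos n⟩) :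
    Lattice (Fin n) where
  le := rle L
  lt := fun a b => rle L a b ∧ ¬ rle L b a
  lt_iff_le_not_ge := fun _ _ => Iff.rfl
  le_refl := fun a => L.le_refl _
  le_trans := fun a b c h1 h2 => L.le_trans _ _ _ h1 h2
  le_antisymm := fun a b h1 h2 => Fin.castSucc_injective n (L.le_antisymm _ _ h1 h2)
  sup := fun a b => (L.sup a.castSucc b.castSucc).castPred (hsup a b)
  le_sup_left := fun a b => by
    show L.le a.castSucc (((L.sup a.castSucc b.castSucc).castPred (hsup a b)).castSucc)
    rw [Fin.castSucc_castPred]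
    exact L.le_sup_left _ _
  le_sup_right := fun a b => by
    show L.le b.castSucc (((L.sup a.castSucc b.castSucc).castPred (hsup a b)).castSucc)
    rw [Fin.castSucc_castPred]
    exact L.le_sup_right _ _
  sup_le := fun a b c h1 h2 => by
    show L.le (((L.sup a.castSucc b.castSucc).castPred (hsup a b)).castSucc) c.castSucc
    rw [Fin.castSucc_castPred]
    exact L.sup_le _ _ _ h1 h2
  inf := fun a b =>
    if h : L.inf a.castSucc b.castSucc = Fin.last n then ⟨0, hpos⟩
    else (L.inf a.castSucc b.castSucc).castPred h
  inf_le_left := fun a b => by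
    split
    · show L.le ((⟨0, hpos⟩ : Fin n)).castSucc a.castSucc
      exact hz _
    · next h =>
      show L.le (((L.inf a.castSucc b.castSucc).castPred h).castSucc) a.castSucc
      rw [Fin.castSucc_castPred]
      exact L.inf_le_left _ _
  inf_le_right := fun a b => by
    split
    · show L.le ((⟨0, hpos⟩ : Fin n)).castSucc b.castSucc
      exact hz _
    · next h =>
      show L.le (((L.inf a.castSucc b.castSucc).castPred h).castSucc) b.castSucc
      rw [Fin.castSucc_castPred]
      exact L.inf_le_right _ _
  le_inf := fun c a b h1 h2 => by
    split
    · next h =>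
      show L.le c.castSucc ((⟨0, hpos⟩ : Fin n)).castSucc
      have hcle : L.le c.castSucc (Fin.last n) := h ▸ L.le_inf _ _ _ h1 h2
      have hcne : c.castSucc ≠ Fin.last n := by
        intro hh; have := congrArg Fin.val hh; simp at this; omega
      rw [hA c.castSucc hcle hcne]
      exact hz _
    · next h =>
      show L.le c.castSucc (((L.inf a.castSucc b.castSucc).castPred h).castSucc)
      rw [Fin.castSucc_castPred]
      exact L.le_inf _ _ _ h1 h2

private lemma mkM_le {n : ℕ} (L : Lattice (Fin (n + 1))) (hpos : 0 < n)
    (hsup : ∀ a b : Fin n, L.sup a.castSucc b.castSucc ≠ Fin.last n)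
    (hz : ∀ a, L.le ⟨0, Nat.succ_pos n⟩ a)
    (hA : ∀ x, L.le x (Fin.last n) → x ≠ Fin.last n → x = ⟨0, Nat.succ_pos n⟩) :
    (mkM L hpos hsup hz hA).le = rle L := rfl

/-- removing the last-labelled atom of a levellised `(n+1)`-lattice yields a
levellised `n`-lattice with the same depths. -/
theorem statement2 {n : ℕ} (hn : 1 < n) (L : Lattice (Fin (n + 1)))
    (hb : Bounds L.le ⟨0, by omega⟩ ⟨1, by omega⟩)
    (hlev : Levellised L.le ⟨1, by omega⟩) :
    ∃ M : Lattice (Fin n),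
      (∀ a b : Fin n, M.le a b ↔ L.le a.castSucc b.castSucc) ∧
      Bounds M.le ⟨0, by omega⟩ ⟨1, by omega⟩ ∧
      Levellised M.le ⟨1, by omega⟩ ∧
      ∀ i : Fin n, 1 ≤ (i : ℕ) →
        dep M.le ⟨1, by omega⟩ i = dep L.le ⟨1, by omega⟩ i.castSucc := by
  set z : Fin (n + 1) := ⟨0, by omega⟩ with hzdef
  set t : Fin (n + 1) := ⟨1, by omega⟩ with htdef
  have hz : ∀ a, L.le z a := hb.1
  have ht : ∀ a, L.le a t := hb.2
  set e : Fin (n + 1) := Fin.last n with hedef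
  -- Claim A: the only element strictly below `e` is `z`.
  have hA : ∀ x : Fin (n + 1), L.le x e → x ≠ e → x = z := by
    intro x hxe hxne
    by_contra hx0
    have hxpos : 0 < (x : ℕ) := by
      rcases Nat.eq_zero_or_pos (x : ℕ) with h | h
      · exact absurd (Fin.ext h : x = z) hx0
      · exact h
    have hne : ({k | ∃ l : List (Fin (n+1)),
        List.Chain' (fun x y => L.le y x ∧ y ≠ x) l ∧
        l.head? = some t ∧ l.getLast? = some e ∧ l.length = k + 1}).Nonempty := by
      refine ⟨1, [t, e], ?_, rfl, rfl, rfl⟩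
      refine List.isChain_cons_cons.mpr ⟨⟨ht e, ?_⟩, List.isChain_singleton e⟩
      intro h
      have : (e : ℕ) = (t : ℕ) := congrArg Fin.val h
      simp [htdef, hedef] at this
      omega
    have hdepe : dep L.le t e = sSup {k | ∃ l : List (Fin (n+1)),
        List.Chain' (fun x y => L.le y x ∧ y ≠ x) l ∧
        l.head? = some t ∧ l.getLast? = some e ∧ l.length = k + 1} := rfl
    have hmem := Nat.sSup_mem hne (chain_bdd L t e)
    rw [← hdepe] at hmem
    obtain ⟨l, hc, hh, hg, hl⟩ := hmem
    have h2 : dep L.le t e + 1 ∈ {k | ∃ l : List (Fin (n+1)),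
        List.Chain' (fun x y => L.le y x ∧ y ≠ x) l ∧
        l.head? = some t ∧ l.getLast? = some x ∧ l.length = k + 1} := by
      refine ⟨l ++ [x], ?_, ?_, ?_, ?_⟩
      · refine List.isChain_append.mpr ⟨hc, List.isChain_singleton x, ?_⟩
        intro y hy w hw
        rw [hg] at hy
        simp at hy hw
        subst hy; subst hw
        exact ⟨hxe, hxne⟩
      · rw [List.head?_append_of_ne_nil]
        · exact hh
        · intro h; rw [h] at hh; simp at hh
      · simp
      · rw [List.length_append, hl]
        simp
    have hge : dep L.le t e + 1 ≤ dep L.le t x := le_csSup (chain_bdd L t x) h2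
    have hle : dep L.le t x ≤ dep L.le t e := hlev x e hxpos (by
      have := x.isLt
      simp [hedef]
      omega)
    omega
  -- chains starting at z are singletons
  have hzero : ∀ l : List (Fin (n+1)),
      List.Chain' (fun x y => L.le y x ∧ y ≠ x) (z :: l) → l = [] := by
    intro l hcl
    cases l with
    | nil => rfl
    | cons c l =>
      have h1 := (List.isChain_cons_cons.mp hcl).1
      exact absurd (L.le_antisymm _ _ h1.1 (hz c)) h1.2
  -- Claim C: descending chains containing e end at z or e
  have hC : ∀ l : List (Fin (n+1)), ∀ i : Fin (n+1),
      List.Chain' (fun x y => L.le y x ∧ y ≠ x) l → l.getLast? = some i →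
      e ∈ l → i = z ∨ i = e := by
    intro l
    induction l with
    | nil => intro i _ _ h; simp at h
    | cons a l ih =>
      intro i hc hg hm
      cases l with
      | nil =>
        simp at hg hm
        subst hm; subst hg
        exact Or.inr rfl
      | cons b l' =>
        rcases List.mem_cons.mp hm with hae | hmem
        · have h1 := (List.isChain_cons_cons.mp hc).1
          subst hae
          have hb0 : b = z := hA b h1.1 h1.2
          have hl' : l' = [] := by
            apply hzero
            rw [← hb0]
            exact (List.isChain_cons_cons.mp hc).2
          subst hl'
          simp at hg
          subst hb0
          exact Or.inl hg.symm
        · exact ih i (List.isChain_cons_cons.mp hc).2 (by simpa using hg) hmem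
  -- chains from t to i avoid e when i ∉ {z, e}
  have hAvoid : ∀ l : List (Fin (n+1)), ∀ i : Fin (n+1),
      List.Chain' (fun x y => L.le y x ∧ y ≠ x) l → l.getLast? = some i →
      i ≠ z → i ≠ e → ∀ x ∈ l, x ≠ e := by
    intro l i hc hg hi0 hie x hx hxe
    subst hxe
    rcases hC l i hc hg hx with h | h
    · exact hi0 h
    · exact hie h
  -- retraction
  set g : Fin (n + 1) → Fin n := fun x => if h : (x : ℕ) < n then ⟨x, h⟩ else ⟨0, by omega⟩
    with hgdef
  have hg1 : ∀ i : Fin n, g i.castSucc = i := by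
    intro i
    simp only [hgdef, Fin.coe_castSucc, i.isLt, dif_pos]
  have hg2 : ∀ x : Fin (n + 1), x ≠ e → (g x).castSucc = x := by
    intro x hx
    have hlt : (x : ℕ) < n := by
      have := x.isLt
      rcases Nat.lt_or_ge (x : ℕ) n with h | h
      · exact h
      · exact absurd (Fin.ext (by simp [hedef]; omega) : x = e) hx
    simp only [hgdef, hlt, dif_pos]
    exact Fin.ext rfl
  -- sup of proper elements is proper
  have hsup_ne : ∀ a b : Fin n, L.sup a.castSucc b.castSucc ≠ e := by
    intro a b h
    have hane : a.castSucc ≠ e := by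
      intro hh; have := congrArg Fin.val hh; have := a.isLt
      simp [hedef] at *
    have hbne : b.castSucc ≠ e := by
      intro hh; have := congrArg Fin.val hh; have := b.isLt
      simp [hedef] at *
    have ha := hA a.castSucc (h ▸ L.le_sup_left _ _) hane
    have hb' := hA b.castSucc (h ▸ L.le_sup_right _ _) hbne
    have hzz : L.sup a.castSucc b.castSucc = z := by
      rw [ha, hb'] at h ⊢
      exact L.le_antisymm _ _ (L.sup_le _ _ _ (L.le_refl z) (L.le_refl z)) (L.le_sup_left _ _)
    rw [hzz] at h
    have := congrArg Fin.val h
    simp [hzdef, hedef] at this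
    omega
  -- depth transfer
  have hdepeq : ∀ i : Fin n, 1 ≤ (i : ℕ) →
      dep (rle L) ⟨1, by omega⟩ i = dep L.le t i.castSucc := by
    intro i hi
    have hset : {k | ∃ l : List (Fin n),
        List.Chain' (fun x y => rle L y x ∧ y ≠ x) l ∧
        l.head? = some ⟨1, by omega⟩ ∧ l.getLast? = some i ∧ l.length = k + 1}
        = {k | ∃ l : List (Fin (n+1)),
        List.Chain' (fun x y => L.le y x ∧ y ≠ x) l ∧
        l.head? = some t ∧ l.getLast? = some i.castSucc ∧ l.length = k + 1} := by
      ext k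
      constructor
      · rintro ⟨l, hc, hh, hg, hl⟩
        refine ⟨l.map Fin.castSucc, ?_, ?_, ?_, by simpa using hl⟩
        · refine chain'_map_of_mem Fin.castSucc l hc ?_
          rintro x - y - ⟨h1, h2⟩
          refine ⟨?_, fun hh' => h2 (Fin.castSucc_injective n hh')⟩
          exact h1
        · rw [List.head?_map, hh]; rfl
        · rw [List.getLast?_map, hg]; rfl
      · rintro ⟨l, hc, hh, hg, hl⟩
        have hi0 : i.castSucc ≠ z := by
          intro hh'; have := congrArg Fin.val hh'; simp [hzdef] at this; omega
        have hie : i.castSucc ≠ e := by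
          intro hh'; have := congrArg Fin.val hh'; simp [hedef] at this
          have := i.isLt; omega
        have havm := hAvoid l i.castSucc hc hg hi0 hie
        refine ⟨l.map g, ?_, ?_, ?_, by simpa using hl⟩
        · refine chain'_map_of_mem g l hc ?_
          rintro x hx y hy ⟨h1, h2⟩
          constructor
          · show L.le ((g y).castSucc) ((g x).castSucc)
            rw [hg2 y (havm y hy), hg2 x (havm x hx)]
            exact h1
          · intro hh'
            apply h2
            rw [← hg2 y (havm y hy), ← hg2 x (havm x hx), hh']
        · rw [List.head?_map, hh]
          have : g t = ⟨1, by omega⟩ := by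
            have h1 : ((⟨1, by omega⟩ : Fin n)).castSucc = t := rfl
            rw [← h1, hg1]
          show some (g t) = some ⟨1, by omega⟩
          rw [this]
        · rw [List.getLast?_map, hg]
          show some (g i.castSucc) = some i
          rw [hg1]
    have e1 : dep (rle L) ⟨1, by omega⟩ i = sSup {k | ∃ l : List (Fin n),
        List.Chain' (fun x y => rle L y x ∧ y ≠ x) l ∧
        l.head? = some ⟨1, by omega⟩ ∧ l.getLast? = some i ∧ l.length = k + 1} := rfl
    have e2 : dep L.le t i.castSucc = sSup {k | ∃ l : List (Fin (n+1)),
        List.Chain' (fun x y => L.le y x ∧ y ≠ x) l ∧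
        l.head? = some t ∧ l.getLast? = some i.castSucc ∧ l.length = k + 1} := rfl
    rw [e1, e2, hset]
  refine ⟨mkM L (by omega) hsup_ne hz hA, ?_, ?_, ?_, ?_⟩
  · intro a b
    rw [mkM_le]
    exact Iff.rfl
  · rw [mkM_le]
    constructor
    · intro a
      show L.le ((⟨0, by omega⟩ : Fin n)).castSucc a.castSucc
      exact hz _
    · intro a
      show L.le a.castSucc ((⟨1, by omega⟩ : Fin n)).castSucc
      exact ht _
  · intro i j hi hij
    rw [mkM_le, hdepeq i hi, hdepeq j (le_trans hi hij)]
    exact hlev i.castSucc j.castSucc (by simpa using hi) (by simpa using hij)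
  · intro i hi
    rw [mkM_le]
    exact hdepeq i hi

end PaperLattice
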